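/- arXiv:1504.01548 — 5 statements merged into one kernel-verified Lean document; each statement's English description precedes it below -/
import Mathlib

section
/- Suppose φ₁, …, φₙ are C¹ Koopman eigenfunctions of the flow ψ with eigenvalues λ₁, …, λₙ satisfying λ₁ ∈ ℝ and Re(λⱼ) ≤ λ₁ for j ≥ 2. Define K(x) = { δx : Dφ₁(x)[δx] − |Dφⱼ(x)[δx]| ≥ 0 for all j ≥ 2 }. Then for all t > 0 and all x, the linearized flow maps the cone into itself: Dₓψ(t,x)[K(x)] ⊆ K(ψ(t,x)). -/
/-- Cone invariance from Koopman eigenfunctions: with `φ₁` a real-valued eigenfunction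
with real eigenvalue `λ₁` and complex eigenfunctions `φⱼ` with `Re λⱼ ≤ λ₁`, the
linearized flow maps `K(x)` into `K(ψ t x)` for `t > 0`. -/
theorem stmt3 {n m : ℕ} (f : (Fin n → ℝ) → (Fin n → ℝ)) (ψ : ℝ → (Fin n → ℝ) → (Fin n → ℝ))
    (hf : ContDiff ℝ 2 f)
    (hflow : ∀ t x, HasDerivAt (fun s => ψ s x) (f (ψ t x)) t)
    (hψ0 : ∀ x, ψ 0 x = x)
    (hψC : ∀ t, ContDiff ℝ 1 (ψ t))
    (φ₁ : (Fin n → ℝ) → ℝ) (lam₁ : ℝ)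
    (φ : Fin m → ((Fin n → ℝ) → ℂ)) (lam : Fin m → ℂ)
    (hφ₁ : ContDiff ℝ 1 φ₁) (hφ : ∀ j, ContDiff ℝ 1 (φ j))
    (heig₁ : ∀ t x, φ₁ (ψ t x) = Real.exp (lam₁ * t) * φ₁ x)
    (heig : ∀ j t x, φ j (ψ t x) = Complex.exp (lam j * t) * φ j x)
    (hdom : ∀ j, (lam j).re ≤ lam₁)
    (K : (Fin n → ℝ) → Set (Fin n → ℝ))
    (hK : ∀ x, K x =
      {δx | ∀ j, fderiv ℝ φ₁ x δx - ‖fderiv ℝ (φ j) x δx‖ ≥ 0}) :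
    ∀ t > (0:ℝ), ∀ x : Fin n → ℝ, ∀ δx ∈ K x, fderiv ℝ (ψ t) x δx ∈ K (ψ t x) := by
  intro t ht x δx hδ
  rw [hK] at hδ ⊢
  intro j
  have hψd : DifferentiableAt ℝ (ψ t) x := ((hψC t).differentiable one_ne_zero).differentiableAt
  have h1 : fderiv ℝ φ₁ (ψ t x) (fderiv ℝ (ψ t) x δx)
      = Real.exp (lam₁ * t) * fderiv ℝ φ₁ x δx := by
    have hc : fderiv ℝ (fun y => φ₁ (ψ t y)) x
        = (fderiv ℝ φ₁ (ψ t x)).comp (fderiv ℝ (ψ t) x) :=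
      fderiv_comp x ((hφ₁.differentiable one_ne_zero) _) hψd
    have he : (fun y => φ₁ (ψ t y)) = fun y => Real.exp (lam₁ * t) * φ₁ y := by
      funext y; exact heig₁ t y
    calc fderiv ℝ φ₁ (ψ t x) (fderiv ℝ (ψ t) x δx)
        = fderiv ℝ (fun y => φ₁ (ψ t y)) x δx := by rw [hc]; rfl
      _ = fderiv ℝ (fun y => Real.exp (lam₁ * t) * φ₁ y) x δx := by rw [he]
      _ = Real.exp (lam₁ * t) * fderiv ℝ φ₁ x δx := by
          rw [fderiv_const_mul ((hφ₁.differentiable one_ne_zero) x)]; rfl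
  have h2 : fderiv ℝ (φ j) (ψ t x) (fderiv ℝ (ψ t) x δx)
      = Complex.exp (lam j * t) * fderiv ℝ (φ j) x δx := by
    have hc : fderiv ℝ (fun y => φ j (ψ t y)) x
        = (fderiv ℝ (φ j) (ψ t x)).comp (fderiv ℝ (ψ t) x) :=
      fderiv_comp x (((hφ j).differentiable one_ne_zero) _) hψd
    have he : (fun y => φ j (ψ t y)) = fun y => Complex.exp (lam j * t) * φ j y := by
      funext y; exact heig j t y
    calc fderiv ℝ (φ j) (ψ t x) (fderiv ℝ (ψ t) x δx)
        = fderiv ℝ (fun y => φ j (ψ t y)) x δx := by rw [hc]; rfl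
      _ = fderiv ℝ (fun y => Complex.exp (lam j * t) * φ j y) x δx := by rw [he]
      _ = Complex.exp (lam j * t) * fderiv ℝ (φ j) x δx := by
          rw [fderiv_const_mul (((hφ j).differentiable one_ne_zero) x)]; rfl
  have hδj := hδ j
  rw [h1, h2, norm_mul, Complex.norm_exp]
  have habs : ‖fderiv ℝ (φ j) x δx‖ ≥ 0 := norm_nonneg _
  have hre : (lam j * t).re = (lam j).re * t := by simp [Complex.mul_re]
  have hle : Real.exp ((lam j * t).re) ≤ Real.exp (lam₁ * t) := by
    rw [hre]
    exact Real.exp_le_exp.mpr (mul_le_mul_of_nonneg_right (hdom j) ht.le)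
  have h3 : Real.exp ((lam j * t).re) * ‖fderiv ℝ (φ j) x δx‖
      ≤ Real.exp (lam₁ * t) * fderiv ℝ φ₁ x δx := by
    calc Real.exp ((lam j * t).re) * ‖fderiv ℝ (φ j) x δx‖
        ≤ Real.exp (lam₁ * t) * ‖fderiv ℝ (φ j) x δx‖ :=
          mul_le_mul_of_nonneg_right hle habs
      _ ≤ Real.exp (lam₁ * t) * fderiv ℝ φ₁ x δx := by
          apply mul_le_mul_of_nonneg_left _ (Real.exp_nonneg _)
          linarith [hδj]
  linarith
end

section
/- Let φ₁, …, φₙ be C¹ Koopman eigenfunctions with λ₁ ∈ ℝ and Re(λⱼ) ≤ λ₁. If δx ∈ K(x) (i.e. Dφ₁(x)[δx] ≥ |Dφⱼ(x)[δx]| for all j ≥ 2), then for every t > 0 and every j ≥ 2, Dφ₁(ψ(t,x))[Dψᵗ(x)δx] − |Dφⱼ(ψ(t,x))[Dψᵗ(x)δx]| ≥ e^{λ₁ t} ( Dφ₁(x)[δx] − |Dφⱼ(x)[δx]| ). -/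
/-- Quantitative cone contraction inequality: if `Dφ₁(x)δx ≥ |Dφⱼ(x)δx|` for all `j ≥ 2`,
then for `t > 0`,
`Dφ₁(ψ t x)[Dψᵗ(x)δx] − |Dφⱼ(ψ t x)[Dψᵗ(x)δx]| ≥ e^{λ₁ t}(Dφ₁(x)δx − |Dφⱼ(x)δx|)`. -/
theorem stmt4 {n m : ℕ} (f : (Fin n → ℝ) → (Fin n → ℝ)) (ψ : ℝ → (Fin n → ℝ) → (Fin n → ℝ))
    (hf : ContDiff ℝ 2 f)
    (hflow : ∀ t x, HasDerivAt (fun s => ψ s x) (f (ψ t x)) t)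
    (hψ0 : ∀ x, ψ 0 x = x)
    (hψC : ∀ t, ContDiff ℝ 1 (ψ t))
    (φ₁ : (Fin n → ℝ) → ℝ) (lam₁ : ℝ)
    (φ : Fin m → ((Fin n → ℝ) → ℂ)) (lam : Fin m → ℂ)
    (hφ₁ : ContDiff ℝ 1 φ₁) (hφ : ∀ j, ContDiff ℝ 1 (φ j))
    (heig₁ : ∀ t x, φ₁ (ψ t x) = Real.exp (lam₁ * t) * φ₁ x)
    (heig : ∀ j t x, φ j (ψ t x) = Complex.exp (lam j * t) * φ j x)
    (hdom : ∀ j, (lam j).re ≤ lam₁) :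
    ∀ (x δx : Fin n → ℝ),
      (∀ j, ‖fderiv ℝ (φ j) x δx‖ ≤ fderiv ℝ φ₁ x δx) →
      ∀ t > (0:ℝ), ∀ j,
        fderiv ℝ φ₁ (ψ t x) (fderiv ℝ (ψ t) x δx)
            - ‖fderiv ℝ (φ j) (ψ t x) (fderiv ℝ (ψ t) x δx)‖
          ≥ Real.exp (lam₁ * t) *
            (fderiv ℝ φ₁ x δx - ‖fderiv ℝ (φ j) x δx‖) := by
  intro x δx hcone t ht j
  have hψd : DifferentiableAt ℝ (ψ t) x := ((hψC t).differentiable one_ne_zero) x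
  have hφ₁d : ∀ y, DifferentiableAt ℝ φ₁ y := fun y => (hφ₁.differentiable one_ne_zero) y
  have hφjd : ∀ y, DifferentiableAt ℝ (φ j) y := fun y => ((hφ j).differentiable one_ne_zero) y
  -- chain rule for φ₁
  have h1 : fderiv ℝ φ₁ (ψ t x) (fderiv ℝ (ψ t) x δx)
      = Real.exp (lam₁ * t) * fderiv ℝ φ₁ x δx := by
    have hcomp : fderiv ℝ (φ₁ ∘ ψ t) x
        = (fderiv ℝ φ₁ (ψ t x)).comp (fderiv ℝ (ψ t) x) :=
      fderiv_comp x (hφ₁d _) hψd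
    have heq : (φ₁ ∘ ψ t) = fun y => Real.exp (lam₁ * t) * φ₁ y :=
      funext fun y => heig₁ t y
    have hconst : fderiv ℝ (fun y => Real.exp (lam₁ * t) * φ₁ y) x
        = Real.exp (lam₁ * t) • fderiv ℝ φ₁ x :=
      fderiv_const_mul (hφ₁d x) _
    have := hcomp.symm.trans (heq ▸ hconst)
    have h := congrArg (fun L : (Fin n → ℝ) →L[ℝ] ℝ => L δx) this
    simpa using h
  -- chain rule for φ j
  have h2 : fderiv ℝ (φ j) (ψ t x) (fderiv ℝ (ψ t) x δx)
      = Complex.exp (lam j * t) * fderiv ℝ (φ j) x δx := by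
    have hcomp : fderiv ℝ (φ j ∘ ψ t) x
        = (fderiv ℝ (φ j) (ψ t x)).comp (fderiv ℝ (ψ t) x) :=
      fderiv_comp x (hφjd _) hψd
    have heq : (φ j ∘ ψ t) = fun y => Complex.exp (lam j * t) * φ j y :=
      funext fun y => heig j t y
    have hconst : fderiv ℝ (fun y => Complex.exp (lam j * t) * φ j y) x
        = Complex.exp (lam j * t) • fderiv ℝ (φ j) x :=
      fderiv_const_mul (hφjd x) _
    have := hcomp.symm.trans (heq ▸ hconst)
    have h := congrArg (fun L : (Fin n → ℝ) →L[ℝ] ℂ => L δx) this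
    simpa [smul_eq_mul] using h
  rw [h1, h2, norm_mul]
  have habs : ‖Complex.exp (lam j * t)‖ = Real.exp ((lam j).re * t) := by
    rw [Complex.norm_exp]
    norm_num
  rw [habs]
  have hb : (0:ℝ) ≤ ‖fderiv ℝ (φ j) x δx‖ := norm_nonneg _
  have hle : Real.exp ((lam j).re * t) ≤ Real.exp (lam₁ * t) :=
    Real.exp_le_exp.mpr (mul_le_mul_of_nonneg_right (hdom j) ht.le)
  nlinarith [hcone j]
end

section
/- Suppose φ₁ is a C¹ Koopman eigenfunction with purely imaginary eigenvalue λ₁ = iω, with |φ₁| constant nonzero and argument θ = ∠φ₁ of class C¹, and φ₂, …, φₙ are C¹ Koopman eigenfunctions with Re(λⱼ) ≤ 0 for j ≥ 2. Define K(x) = { δx : Dθ(x)[δx] − |Dφⱼ(x)[δx]| ≥ 0 for all j ≥ 2 }. Then Dₓψ(t,x)[K(x)] ⊆ K(ψ(t,x)) for all t > 0 and all x. -/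
lemma key_comp {n : ℕ} (g : (Fin n → ℝ) → (Fin n → ℝ)) (hg : Differentiable ℝ g)
    (u : (Fin n → ℝ) → ℂ) (hu : Differentiable ℝ u) (c : ℂ)
    (h : ∀ y, u (g y) = c * u y) (x δx : Fin n → ℝ) :
    fderiv ℝ u (g x) (fderiv ℝ g x δx) = c * fderiv ℝ u x δx := by
  have e1 : fderiv ℝ (u ∘ g) x δx = fderiv ℝ u (g x) (fderiv ℝ g x δx) := by
    rw [fderiv_comp x (hu (g x)) (hg x)]; rfl
  have h2 : (u ∘ g) = fun y => c * u y := funext fun y => h y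
  have e2 : fderiv ℝ (u ∘ g) x δx = c * fderiv ℝ u x δx := by
    rw [h2, fderiv_const_mul (hu x)]; rfl
  exact e1.symm.trans e2

lemma dphi1 {n : ℕ} (φ₁ : (Fin n → ℝ) → ℂ) (θ : (Fin n → ℝ) → ℝ) (r : ℝ)
    (hθ : ContDiff ℝ 1 θ)
    (hmod : ∀ x, φ₁ x = r * Complex.exp (Complex.I * θ x)) (z δz : Fin n → ℝ) :
    fderiv ℝ φ₁ z δz
      = (r * Complex.exp (Complex.I * θ z) * Complex.I) * (fderiv ℝ θ z δz) := by
  have hθz := (hθ.differentiable one_ne_zero z).hasFDerivAt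
  have h1 : HasFDerivAt (fun y => (θ y : ℂ)) (Complex.ofRealCLM.comp (fderiv ℝ θ z)) z :=
    Complex.ofRealCLM.hasFDerivAt.comp z hθz
  have h4 := ((h1.const_mul Complex.I).cexp).const_mul (r : ℂ)
  have h5 : HasFDerivAt φ₁
      ((r:ℂ) • (Complex.exp (Complex.I * θ z) •
        (Complex.I • (Complex.ofRealCLM.comp (fderiv ℝ θ z))))) z := by
    have hfe : φ₁ = fun y => (r:ℂ) * Complex.exp (Complex.I * θ y) := funext hmod
    rw [hfe]; exact h4
  rw [h5.fderiv]
  simp [mul_comm, mul_assoc, mul_left_comm]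

/-- Cone invariance in the limit-cycle case: `φ₁` is a Koopman eigenfunction with purely
imaginary eigenvalue `iω`, constant nonzero modulus `r` and C¹ argument `θ`, and
`φⱼ` are eigenfunctions with `Re λⱼ ≤ 0`. Then the cone field
`K(x) = {δx | Dθ(x)δx − |Dφⱼ(x)δx| ≥ 0}` is invariant under the linearized flow. -/
theorem stmt6 {n m : ℕ} (f : (Fin n → ℝ) → (Fin n → ℝ)) (ψ : ℝ → (Fin n → ℝ) → (Fin n → ℝ))
    (hf : ContDiff ℝ 2 f)
    (hflow : ∀ t x, HasDerivAt (fun s => ψ s x) (f (ψ t x)) t)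
    (hψ0 : ∀ x, ψ 0 x = x)
    (hψC : ∀ t, ContDiff ℝ 1 (ψ t))
    (φ₁ : (Fin n → ℝ) → ℂ) (ω : ℝ) (θ : (Fin n → ℝ) → ℝ) (r : ℝ) (hr : 0 < r)
    (φ : Fin m → ((Fin n → ℝ) → ℂ)) (lam : Fin m → ℂ)
    (hφ₁ : ContDiff ℝ 1 φ₁) (hθ : ContDiff ℝ 1 θ) (hφ : ∀ j, ContDiff ℝ 1 (φ j))
    (hmod : ∀ x, φ₁ x = r * Complex.exp (Complex.I * θ x))
    (heig₁ : ∀ t x, φ₁ (ψ t x) = Complex.exp (Complex.I * ω * t) * φ₁ x)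
    (heig : ∀ j t x, φ j (ψ t x) = Complex.exp (lam j * t) * φ j x)
    (hdom : ∀ j, (lam j).re ≤ 0)
    (K : (Fin n → ℝ) → Set (Fin n → ℝ))
    (hK : ∀ x, K x =
      {δx | ∀ j, fderiv ℝ θ x δx - ‖fderiv ℝ (φ j) x δx‖ ≥ 0}) :
    ∀ t > (0:ℝ), ∀ x : Fin n → ℝ, ∀ δx ∈ K x, fderiv ℝ (ψ t) x δx ∈ K (ψ t x) := by
  intro t ht x δx hδx
  rw [hK] at hδx ⊢
  intro j
  set δy := fderiv ℝ (ψ t) x δx with hδy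
  have hgψ : Differentiable ℝ (ψ t) := (hψC t).differentiable one_ne_zero
  -- argument invariance
  have hphi1 : fderiv ℝ φ₁ (ψ t x) δy
      = Complex.exp (Complex.I * ω * t) * fderiv ℝ φ₁ x δx :=
    key_comp (ψ t) hgψ φ₁ (hφ₁.differentiable one_ne_zero) _ (fun y => heig₁ t y) x δx
  have hA := dphi1 φ₁ θ r hθ hmod (ψ t x) δy
  have hB := dphi1 φ₁ θ r hθ hmod x δx
  have hrot : (r:ℂ) * Complex.exp (Complex.I * θ (ψ t x))
      = Complex.exp (Complex.I * ω * t) * ((r:ℂ) * Complex.exp (Complex.I * θ x)) := by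
    rw [← hmod, ← hmod]; exact heig₁ t x
  have hθeq : fderiv ℝ θ (ψ t x) δy = fderiv ℝ θ x δx := by
    have hc : (Complex.exp (Complex.I * ω * t) * ((r:ℂ) * Complex.exp (Complex.I * θ x))
        * Complex.I) ≠ 0 := by
      apply mul_ne_zero (mul_ne_zero (Complex.exp_ne_zero _)
        (mul_ne_zero (by exact_mod_cast hr.ne') (Complex.exp_ne_zero _))) Complex.I_ne_zero
    have key : (Complex.exp (Complex.I * ω * t) * ((r:ℂ) * Complex.exp (Complex.I * θ x))
          * Complex.I) * (fderiv ℝ θ (ψ t x) δy : ℂ)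
        = (Complex.exp (Complex.I * ω * t) * ((r:ℂ) * Complex.exp (Complex.I * θ x))
          * Complex.I) * (fderiv ℝ θ x δx : ℂ) := by
      have := hphi1
      rw [hA, hB, hrot] at this
      ring_nf at this ⊢
      linear_combination this
    exact_mod_cast mul_left_cancel₀ hc key
  -- modulus decrease for φ j
  have hphij : fderiv ℝ (φ j) (ψ t x) δy
      = Complex.exp (lam j * t) * fderiv ℝ (φ j) x δx :=
    key_comp (ψ t) hgψ (φ j) ((hφ j).differentiable one_ne_zero) _ (fun y => heig j t y) x δx
  have habs : ‖fderiv ℝ (φ j) (ψ t x) δy‖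
      ≤ ‖fderiv ℝ (φ j) x δx‖ := by
    rw [hphij, norm_mul, Complex.norm_exp]
    have hre : (lam j * (t:ℂ)).re = (lam j).re * t := by simp
    rw [hre]
    calc Real.exp ((lam j).re * t) * ‖fderiv ℝ (φ j) x δx‖
        ≤ 1 * ‖fderiv ℝ (φ j) x δx‖ := by
          apply mul_le_mul_of_nonneg_right _ (norm_nonneg _)
          rw [Real.exp_le_one_iff]
          exact mul_nonpos_of_nonpos_of_nonneg (hdom j) ht.le
      _ = _ := one_mul _
  have h0 := hδx j
  rw [hθeq]
  linarith
end

section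
/- Suppose φ₂, …, φₙ are C¹ Koopman eigenfunctions with Re(λⱼ) < Re(λ₁) for j ≥ 2 and the map δx ↦ (Dφ₁(x)δx, …, Dφₙ(x)δx) is injective at every x, where φ₁ is a Koopman eigenfunction with real λ₁ (or with |φ₁| constant and λ₁ ∈ iℝ). If w : X → ℝⁿ is the Perron–Frobenius vector field, i.e. w(x) = lim_{t→∞} Dψᵗ(ψ(−t,x))δx / |Dψᵗ(ψ(−t,x))δx| for all admissible δx, then Dφⱼ(x)[w(x)] = 0 for all j ≥ 2. -/
open Filter

lemma chain_eig {E : Type*} [NormedAddCommGroup E] [NormedSpace ℝ E]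
    {𝔸 : Type*} [NormedRing 𝔸] [NormedAlgebra ℝ 𝔸]
    {g : E → 𝔸} {F : E → E} (hg : ContDiff ℝ 1 g) (hF : ContDiff ℝ 1 F)
    {c : 𝔸} (h : ∀ y, g (F y) = c * g y) (y : E) (v : E) :
    fderiv ℝ g (F y) (fderiv ℝ F y v) = c * fderiv ℝ g y v := by
  have h1 : HasFDerivAt F (fderiv ℝ F y) y := (hF.differentiable one_ne_zero y).hasFDerivAt
  have h2 : HasFDerivAt g (fderiv ℝ g (F y)) (F y) :=
    (hg.differentiable one_ne_zero _).hasFDerivAt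
  have h3 := h2.comp y h1
  have h4 : HasFDerivAt (fun y => c * g y) (c • fderiv ℝ g y) y :=
    ((hg.differentiable one_ne_zero y).hasFDerivAt).const_mul c
  have h5 : HasFDerivAt (fun y => c * g y)
      ((fderiv ℝ g (F y)).comp (fderiv ℝ F y)) y := by
    have : (g ∘ F) = fun y => c * g y := funext h
    rwa [this] at h3
  have h6 := h5.unique h4
  have := congrArg (fun (T : E →L[ℝ] 𝔸) => T v) h6
  simpa using this

/-- The Perron–Frobenius vector field `w`, defined as the backward-time limit of the
normalized linearized flow applied to cone directions, annihilates the differentials of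
the non-dominant Koopman eigenfunctions: `Dφⱼ(x)[w(x)] = 0` for `j ≥ 2`. -/
theorem stmt10 {n m : ℕ} (f : (Fin n → ℝ) → (Fin n → ℝ)) (ψ : ℝ → (Fin n → ℝ) → (Fin n → ℝ))
    (hf : ContDiff ℝ 2 f)
    (hflow : ∀ t x, HasDerivAt (fun s => ψ s x) (f (ψ t x)) t)
    (hψ0 : ∀ x, ψ 0 x = x)
    (hgrp : ∀ s t x, ψ t (ψ s x) = ψ (t + s) x)
    (hψC : ∀ t, ContDiff ℝ 1 (ψ t))
    (φ₁ : (Fin n → ℝ) → ℝ) (lam₁ : ℝ)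
    (φ : Fin m → ((Fin n → ℝ) → ℂ)) (lam : Fin m → ℂ)
    (hφ₁ : ContDiff ℝ 1 φ₁) (hφ : ∀ j, ContDiff ℝ 1 (φ j))
    (heig₁ : ∀ t x, φ₁ (ψ t x) = Real.exp (lam₁ * t) * φ₁ x)
    (heig : ∀ j t x, φ j (ψ t x) = Complex.exp (lam j * t) * φ j x)
    (hdom : ∀ j, (lam j).re < lam₁)
    (hinj : ∀ x, Function.Injective
      (fun δx : Fin n → ℝ =>
        (((fderiv ℝ φ₁ x δx : ℝ) : ℂ), fun j => fderiv ℝ (φ j) x δx)))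
    (K : (Fin n → ℝ) → Set (Fin n → ℝ))
    (hK : ∀ x, K x =
      {δx | ∀ j, fderiv ℝ φ₁ x δx - ‖fderiv ℝ (φ j) x δx‖ ≥ 0})
    (w : (Fin n → ℝ) → (Fin n → ℝ))
    (hw : ∀ x : Fin n → ℝ, ∀ δx : Fin n → ℝ, δx ≠ 0 →
      (∀ t : ℝ, 0 ≤ t → δx ∈ K (ψ (-t) x)) →
      Filter.Tendsto
        (fun t : ℝ => ‖fderiv ℝ (ψ t) (ψ (-t) x) δx‖⁻¹ • fderiv ℝ (ψ t) (ψ (-t) x) δx)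
        Filter.atTop (nhds (w x)))
    (hwex : ∀ x : Fin n → ℝ, ∃ δx : Fin n → ℝ, δx ≠ 0 ∧
      ∀ t : ℝ, 0 ≤ t → δx ∈ K (ψ (-t) x)) :
    ∀ (j : Fin m) (x : Fin n → ℝ), fderiv ℝ (φ j) x (w x) = 0 := by
  intro j x
  obtain ⟨δx, hδ0, hδK⟩ := hwex x
  -- the normalized vector
  set u : ℝ → (Fin n → ℝ) :=
    fun t => ‖fderiv ℝ (ψ t) (ψ (-t) x) δx‖⁻¹ • fderiv ℝ (ψ t) (ψ (-t) x) δx with hu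
  have hwlim : Tendsto u atTop (nhds (w x)) := hw x δx hδ0 hδK
  -- limits of the differentials
  have hcont1 : Tendsto (fun t => fderiv ℝ φ₁ x (u t)) atTop (nhds (fderiv ℝ φ₁ x (w x))) :=
    ((fderiv ℝ φ₁ x).continuous.tendsto _).comp hwlim
  have hcontj : Tendsto (fun t => fderiv ℝ (φ j) x (u t)) atTop
      (nhds (fderiv ℝ (φ j) x (w x))) :=
    ((fderiv ℝ (φ j) x).continuous.tendsto _).comp hwlim
  have habs : Tendsto (fun t => ‖fderiv ℝ (φ j) x (u t)‖) atTop
      (nhds ‖fderiv ℝ (φ j) x (w x)‖) :=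
    (continuous_norm.tendsto _).comp hcontj
  -- key pointwise bound for t ≥ 0
  have hbound : ∀ t : ℝ, 0 ≤ t →
      ‖fderiv ℝ (φ j) x (u t)‖ ≤
        Real.exp (((lam j).re - lam₁) * t) * fderiv ℝ φ₁ x (u t) := by
    intro t ht
    set y := ψ (-t) x with hy
    have hxy : ψ t y = x := by rw [hy, hgrp, add_neg_cancel, hψ0]
    set N := ‖fderiv ℝ (ψ t) y δx‖ with hN
    have hNinv : (0:ℝ) ≤ N⁻¹ := inv_nonneg.2 (norm_nonneg _)
    -- derivative identities
    have hj : fderiv ℝ (φ j) x (fderiv ℝ (ψ t) y δx)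
        = Complex.exp (lam j * t) * fderiv ℝ (φ j) y δx := by
      have := chain_eig (hφ j) (hψC t) (fun z => heig j t z) y δx
      rwa [hxy] at this
    have h1 : fderiv ℝ φ₁ x (fderiv ℝ (ψ t) y δx)
        = Real.exp (lam₁ * t) * fderiv ℝ φ₁ y δx := by
      have := chain_eig hφ₁ (hψC t) (fun z => heig₁ t z) y δx
      rwa [hxy] at this
    -- cone condition
    have hKy := hδK t ht
    rw [hK] at hKy
    have hcone : ‖fderiv ℝ (φ j) y δx‖ ≤ fderiv ℝ φ₁ y δx := by
      have := hKy j
      linarith [this]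
    have hcone0 : (0:ℝ) ≤ fderiv ℝ φ₁ y δx :=
      le_trans (norm_nonneg _) hcone
    -- compute the two sides
    have hjval : fderiv ℝ (φ j) x (u t)
        = N⁻¹ • (Complex.exp (lam j * t) * fderiv ℝ (φ j) y δx) := by
      rw [hu]; simp only [map_smul]; rw [hj]
    have h1val : fderiv ℝ φ₁ x (u t)
        = N⁻¹ * (Real.exp (lam₁ * t) * fderiv ℝ φ₁ y δx) := by
      rw [hu]; simp only [map_smul]; rw [h1]; simp [smul_eq_mul]; left; rfl
    rw [hjval, h1val]
    have habs_exp : ‖Complex.exp (lam j * t)‖ = Real.exp ((lam j).re * t) := by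
      rw [Complex.norm_exp]
      congr 1
      simp [Complex.mul_re]
    calc ‖N⁻¹ • (Complex.exp (lam j * t) * fderiv ℝ (φ j) y δx)‖
        = N⁻¹ * (Real.exp ((lam j).re * t) * ‖fderiv ℝ (φ j) y δx‖) := by
          rw [norm_smul, norm_mul, habs_exp,
            Real.norm_eq_abs, abs_of_nonneg hNinv]
      _ ≤ N⁻¹ * (Real.exp ((lam j).re * t) * fderiv ℝ φ₁ y δx) := by
          apply mul_le_mul_of_nonneg_left _ hNinv
          exact mul_le_mul_of_nonneg_left hcone (Real.exp_nonneg _)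
      _ = Real.exp (((lam j).re - lam₁) * t) * (N⁻¹ * (Real.exp (lam₁ * t) * fderiv ℝ φ₁ y δx)) := by
          have hee : Real.exp (((lam j).re - lam₁) * t) * Real.exp (lam₁ * t)
              = Real.exp ((lam j).re * t) := by
            rw [← Real.exp_add]; ring_nf
          rw [← hee]; ring
  -- the bounding function tends to 0
  have hexp0 : Tendsto (fun t : ℝ => Real.exp (((lam j).re - lam₁) * t)) atTop (nhds 0) := by
    apply Real.tendsto_exp_atBot.comp
    exact (tendsto_const_mul_atBot_of_neg (by linarith [hdom j])).2 tendsto_id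
  have hlim0 : Tendsto (fun t : ℝ =>
      Real.exp (((lam j).re - lam₁) * t) * fderiv ℝ φ₁ x (u t)) atTop (nhds 0) := by
    have := hexp0.mul hcont1
    simpa using this
  have hle : ‖fderiv ℝ (φ j) x (w x)‖ ≤ 0 :=
    le_of_tendsto_of_tendsto habs hlim0 ((eventually_ge_atTop 0).mono hbound)
  have : ‖fderiv ℝ (φ j) x (w x)‖ = 0 :=
    le_antisymm hle (norm_nonneg _)
  exact norm_eq_zero.mp this
end

section
/- Let A ∈ ℝ²ˣ² have complex conjugate eigenvalues a ± ib with b ≠ 0. Then there is no closed convex pointed cone K ⊆ ℝ² with K ≠ {0} such that e^{At}K ⊆ K for all t ≥ 0. -/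
open Matrix

lemma keylem (A : Matrix (Fin 2) (Fin 2) ℝ) (a b : ℝ) (hb : b ≠ 0)
    (heig : ∃ v : Fin 2 → ℂ, v ≠ 0 ∧ (A.map Complex.ofReal).mulVec v = (Complex.mk a b) • v) :
    (A - a • 1) * (A - a • 1) = (-(b^2)) • 1 := by
  obtain ⟨v, hv, hAv⟩ := heig
  set u : Fin 2 → ℝ := fun j => (v j).re with hu
  set w : Fin 2 → ℝ := fun j => (v j).im with hw
  have hre : ∀ j, A.mulVec u j = a * u j - b * w j := by
    intro j
    have hre := congrArg Complex.re (congrFun hAv j)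
    simpa [Matrix.mulVec, dotProduct, Matrix.map_apply, Complex.ext_iff, u, w,
      Complex.re_sum, Complex.im_sum, mul_comm] using hre
  have him : ∀ j, A.mulVec w j = b * u j + a * w j := by
    intro j
    have him := congrArg Complex.im (congrFun hAv j)
    simpa [Matrix.mulVec, dotProduct, Matrix.map_apply, Complex.ext_iff, u, w,
      Complex.re_sum, Complex.im_sum, mul_comm] using him
  -- linear independence of u, w
  have hind : LinearIndependent ℝ ![u, w] := by
    rw [LinearIndependent.pair_iff]
    intro c d hcd
    by_contra hne
    have hcd2 : 0 < c^2 + d^2 := by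
      rcases not_and_or.mp hne with h | h <;> positivity
    have h0 : ∀ j, c * u j + d * w j = 0 := fun j => congrFun hcd j
    have h1 : ∀ j, c * (A.mulVec u j) + d * (A.mulVec w j) = 0 := by
      intro j
      have : A.mulVec (c • u + d • w) = A.mulVec 0 := by rw [hcd]
      have := congrFun this j
      simpa only [Matrix.mulVec_add, Matrix.mulVec_smul, Pi.add_apply, Pi.smul_apply, smul_eq_mul,
        Matrix.mulVec_zero, Pi.zero_apply] using this
    have h2 : ∀ j, d * u j - c * w j = 0 := by
      intro j
      have e1 := h1 j
      rw [hre j, him j] at e1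
      have e0 := h0 j
      have : b * (d * u j - c * w j) = 0 := by ring_nf; linear_combination e1 - a * e0
      exact (mul_eq_zero.mp this).resolve_left hb
    have hu0 : ∀ j, u j = 0 := by
      intro j
      have : (c^2 + d^2) * u j = 0 := by linear_combination c * h0 j + d * h2 j
      exact (mul_eq_zero.mp this).resolve_left (ne_of_gt hcd2)
    have hw0 : ∀ j, w j = 0 := by
      intro j
      have : (c^2 + d^2) * w j = 0 := by linear_combination d * h0 j - c * h2 j
      exact (mul_eq_zero.mp this).resolve_left (ne_of_gt hcd2)
    exact hv (funext fun j => Complex.ext (hu0 j) (hw0 j))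
  -- basis
  have hcard : Fintype.card (Fin 2) = Module.finrank ℝ (Fin 2 → ℝ) := by simp
  let e : Module.Basis (Fin 2) ℝ (Fin 2 → ℝ) := basisOfLinearIndependentOfCardEqFinrank hind hcard
  have he : ⇑e = ![u, w] := coe_basisOfLinearIndependentOfCardEqFinrank hind hcard
  -- M kills u and w
  set B := A - a • (1 : Matrix (Fin 2) (Fin 2) ℝ) with hB
  have hBu : B.mulVec u = (-b) • w := by
    funext j
    rw [hB, Matrix.sub_mulVec, Matrix.smul_mulVec, Matrix.one_mulVec, Pi.sub_apply, hre j]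
    simp only [Pi.smul_apply, smul_eq_mul]; ring
  have hBw : B.mulVec w = b • u := by
    funext j
    rw [hB, Matrix.sub_mulVec, Matrix.smul_mulVec, Matrix.one_mulVec, Pi.sub_apply, him j]
    simp only [Pi.smul_apply, smul_eq_mul]; ring
  have hMu : (B * B).mulVec u = (-(b^2)) • u := by
    rw [← Matrix.mulVec_mulVec, hBu, Matrix.mulVec_smul, hBw, smul_smul]
    congr 1; ring
  have hMw : (B * B).mulVec w = (-(b^2)) • w := by
    rw [← Matrix.mulVec_mulVec, hBw, Matrix.mulVec_smul, hBu, smul_smul]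
    congr 1; ring
  have : Matrix.toLin' (B * B) = Matrix.toLin' ((-(b^2)) • (1 : Matrix (Fin 2) (Fin 2) ℝ)) := by
    apply e.ext
    intro i
    fin_cases i
    · simp only [he, Matrix.toLin'_apply, Matrix.smul_mulVec, Matrix.one_mulVec, Fin.zero_eta,
        Fin.mk_one, Matrix.cons_val_zero, Matrix.cons_val_one, Matrix.head_cons]
      exact hMu
    · simp only [he, Matrix.toLin'_apply, Matrix.smul_mulVec, Matrix.one_mulVec, Fin.zero_eta,
        Fin.mk_one, Matrix.cons_val_zero, Matrix.cons_val_one, Matrix.head_cons]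
      exact hMw
  exact Matrix.toLin'.injective this


/-- A real `2×2` matrix with complex conjugate eigenvalues `a ± ib`, `b ≠ 0`, admits no
nontrivial closed convex pointed cone invariant under its flow `e^{At}`, `t ≥ 0`. -/
theorem stmt18 (A : Matrix (Fin 2) (Fin 2) ℝ) (a b : ℝ) (hb : b ≠ 0)
    (heig : ∃ v : Fin 2 → ℂ, v ≠ 0 ∧ (A.map Complex.ofReal).mulVec v = (Complex.mk a b) • v) :
    ¬ ∃ K : Set (Fin 2 → ℝ),
        (0:Fin 2 → ℝ) ∈ K ∧ K ≠ {0} ∧ IsClosed K ∧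
        (∀ x ∈ K, ∀ y ∈ K, x + y ∈ K) ∧
        (∀ (c : ℝ), 0 ≤ c → ∀ x ∈ K, c • x ∈ K) ∧
        K ∩ (-K) = {0} ∧
        (∀ t : ℝ, 0 ≤ t → ∀ x ∈ K, (NormedSpace.exp (t • A)).mulVec x ∈ K) := by
  rintro ⟨K, h0, hKne, _hcl, _hadd, hsmul, hpoint, hinv⟩
  set B := A - a • (1 : Matrix (Fin 2) (Fin 2) ℝ) with hB
  have hBB : B * B = (-(b^2)) • 1 := keylem A a b hb heig
  have hJ : (b⁻¹ • B) * (b⁻¹ • B) = (-1 : Matrix (Fin 2) (Fin 2) ℝ) := by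
    rw [smul_mul_smul_comm, hBB, smul_smul]
    rw [show b⁻¹ * b⁻¹ * -b ^ 2 = -1 by field_simp]
    simp
  set φ : ℂ →ₐ[ℝ] Matrix (Fin 2) (Fin 2) ℝ := Complex.liftAux (b⁻¹ • B) hJ with hφ
  have hφcont : Continuous φ := φ.toLinearMap.continuous_of_finiteDimensional
  have hφt : ∀ t : ℝ, φ (Complex.mk (t * a) (t * b)) = t • A := by
    intro t
    rw [hφ, Complex.liftAux_apply]
    have : (Complex.mk (t * a) (t * b)).re = t * a := rfl
    have h2 : (Complex.mk (t * a) (t * b)).im = t * b := rfl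
    rw [this, h2, Algebra.algebraMap_eq_smul_one, smul_smul, mul_inv_cancel_right₀ hb, hB]
    rw [smul_sub, smul_smul, mul_comm t a, ← smul_smul]
    abel
  set t : ℝ := Real.pi / |b| with ht
  have htpos : 0 < t := div_pos Real.pi_pos (abs_pos.mpr hb)
  have htb : t * b = Real.pi ∨ t * b = -Real.pi := by
    rcases abs_choice b with h | h
    · left; rw [ht, h]; field_simp
    · right; rw [ht, h, div_mul_eq_mul_div, div_neg, mul_div_assoc, div_self hb, mul_one]
  have hexpz : NormedSpace.exp (Complex.mk (t * a) (t * b))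
      = ((-(Real.exp (t * a)) : ℝ) : ℂ) := by
    rw [← Complex.exp_eq_exp_ℂ]
    have : (Complex.mk (t * a) (t * b)) = (t * a : ℝ) + (t * b : ℝ) * Complex.I := by
      apply Complex.ext <;> simp
    rw [this, Complex.exp_add]
    have hexpre : Complex.exp ((t * a : ℝ) : ℂ) = ((Real.exp (t * a) : ℝ) : ℂ) := by
      rw [← Complex.ofReal_exp]
    rcases htb with h | h <;> rw [h, hexpre]
    · push_cast
      rw [Complex.exp_pi_mul_I]; ring
    · push_cast
      rw [neg_mul, Complex.exp_neg, Complex.exp_pi_mul_I]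
      field_simp
  have hexp : NormedSpace.exp (t • A)
      = (-(Real.exp (t * a))) • (1 : Matrix (Fin 2) (Fin 2) ℝ) := by
    letI : SeminormedRing (Matrix (Fin 2) (Fin 2) ℝ) := Matrix.linftyOpSemiNormedRing
    letI : NormedRing (Matrix (Fin 2) (Fin 2) ℝ) := Matrix.linftyOpNormedRing
    letI : NormedAlgebra ℝ (Matrix (Fin 2) (Fin 2) ℝ) := Matrix.linftyOpNormedAlgebra
    rw [← hφt t]
    erw [← NormedSpace.map_exp φ hφcont]
    rw [hexpz,
      show ((-(Real.exp (t * a)) : ℝ) : ℂ) = algebraMap ℝ ℂ (-(Real.exp (t * a))) from rfl,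
      AlgHom.commutes, Algebra.algebraMap_eq_smul_one]
  obtain ⟨x, hxK, hx0⟩ : ∃ x ∈ K, x ≠ 0 := by
    by_contra hcon
    push_neg at hcon
    exact hKne (Set.eq_singleton_iff_unique_mem.mpr ⟨h0, hcon⟩)
  have h1 := hinv t htpos.le x hxK
  rw [hexp, Matrix.smul_mulVec, Matrix.one_mulVec] at h1
  have h2 := hsmul (Real.exp (t * a))⁻¹ (by positivity) _ h1
  rw [smul_smul, show (Real.exp (t * a))⁻¹ * -Real.exp (t * a) = -1 by
    field_simp, neg_one_smul] at h2
  have hmem : x ∈ K ∩ (-K) := ⟨hxK, by simpa [Set.mem_neg] using h2⟩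
  rw [hpoint] at hmem
  exact hx0 hmem
end
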